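/- Let M be a positive integer, let S_k, S_t, T_0 be positive real constants, let E_k, E_t be real constants with E_k > E_t, and let u ∈ ℝ^M. Define f : ℝ^M → ℝ^M componentwise by f(x)_j := (S_k / S_t) · exp(−(E_k − E_t)(1/x_j − 1/T_0)), and define g : ℝ^M → ℝ by g(x) := (1/2) Σ_{j=1}^{M} (f(x)_j − u_j)². Let x̄ ∈ ℝ^M have all components strictly positive, and set v := u − f(x̄). If v ≠ 0, then the directional derivative of g at x̄ in the direction v is strictly negative, i.e., Σ_{j=1}^{M} (∂g(x̄)/∂x_j) · v_j < 0; in other words, v is a descent direction for g at x̄. -/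

import Mathlib

/-- Lemma 4.2: with `E_k > E_t`, for the least squares summand
`g(x) = (1/2) Σ_j (f(x)_j − u_j)²` and any componentwise positive `x̄`, the
residual `v = u − f(x̄)`, if nonzero, is a descent direction for `g` at `x̄`:
`Σ_j (∂g(x̄)/∂x_j) v_j < 0`. -/
theorem residual_is_descent_direction (M : ℕ) (hM : 0 < M)
    (Sk St T0 : ℝ) (hSk : 0 < Sk) (hSt : 0 < St) (hT0 : 0 < T0)
    (Ek Et : ℝ) (hE : Ek > Et) (u : Fin M → ℝ)
    (f : (Fin M → ℝ) → (Fin M → ℝ))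
    (hf : ∀ (x : Fin M → ℝ) (j : Fin M),
      f x j = (Sk / St) * Real.exp (-(Ek - Et) * (1 / x j - 1 / T0)))
    (g : (Fin M → ℝ) → ℝ)
    (hg : ∀ x : Fin M → ℝ, g x = (1 / 2) * ∑ j : Fin M, (f x j - u j) ^ 2)
    (xbar : Fin M → ℝ) (hxbar : ∀ j : Fin M, 0 < xbar j)
    (v : Fin M → ℝ) (hv : v = u - f xbar) (hvne : v ≠ 0) :
    ∑ j : Fin M, fderiv ℝ g xbar (Pi.single j 1) * v j < 0 := by
  have hEk : (0:ℝ) < Ek - Et := sub_pos.mpr hE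
  set c : Fin M → ℝ := fun j => (Sk / St) *
      Real.exp (-(Ek - Et) * (1 / xbar j - 1 / T0)) * ((Ek - Et) / (xbar j)^2) with hc
  have hcpos : ∀ j, 0 < c j := fun j =>
    mul_pos (mul_pos (div_pos hSk hSt) (Real.exp_pos _))
      (div_pos hEk (pow_pos (hxbar j) 2))
  have hgeq : g = fun x => (1/2 : ℝ) * ∑ j : Fin M,
      ((Sk/St) * Real.exp (-(Ek - Et) * (1 / x j - 1 / T0)) - u j)^2 := by
    funext x; rw [hg]; congr 1
    exact Finset.sum_congr rfl fun j _ => by rw [hf]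
  have hL : HasFDerivAt g (∑ i : Fin M,
      ((1/2 : ℝ) * (2 * ((Sk/St) * Real.exp (-(Ek - Et) * (1 / xbar i - 1 / T0)) - u i) * c i)) •
        (ContinuousLinearMap.proj i : (Fin M → ℝ) →L[ℝ] ℝ)) xbar := by
    rw [hgeq]
    have hsum : HasFDerivAt (fun x : Fin M → ℝ => ∑ j : Fin M,
        ((Sk/St) * Real.exp (-(Ek - Et) * (1 / x j - 1 / T0)) - u j)^2)
        (∑ i : Fin M,
          (2 * ((Sk/St) * Real.exp (-(Ek - Et) * (1 / xbar i - 1 / T0)) - u i) * c i) •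
          (ContinuousLinearMap.proj i : (Fin M → ℝ) →L[ℝ] ℝ)) xbar := by
      apply HasFDerivAt.fun_sum
      intro i _
      have h1 : HasDerivAt (fun t : ℝ => 1 / t - 1 / T0) (-(1/(xbar i)^2)) (xbar i) := by
        simpa [one_div] using ((hasDerivAt_inv (ne_of_gt (hxbar i))).sub_const (1/T0))
      have h2 := h1.const_mul (-(Ek - Et))
      have h3 := h2.exp
      have h4 := h3.const_mul (Sk/St)
      have h5 := (h4.sub_const (u i)).pow 2
      have h6 := h5.comp_hasFDerivAt xbar
        ((ContinuousLinearMap.proj i : (Fin M → ℝ) →L[ℝ] ℝ).hasFDerivAt)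
      refine h6.congr_fderiv (congrArg (· • _) ?_)
      rw [hc]
      push_cast
      ring
    have := hsum.const_mul (1/2 : ℝ)
    refine this.congr_fderiv ?_
    rw [Finset.smul_sum]
    exact Finset.sum_congr rfl fun i _ => by rw [smul_smul]
  rw [hL.fderiv]
  have heval : ∀ j : Fin M, (∑ i : Fin M,
      ((1/2 : ℝ) * (2 * ((Sk/St) * Real.exp (-(Ek - Et) * (1 / xbar i - 1 / T0)) - u i) * c i)) •
        (ContinuousLinearMap.proj i : (Fin M → ℝ) →L[ℝ] ℝ)) (Pi.single j 1)
      = -(v j * c j) := by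
    intro j
    have hfm : ∀ i, (Sk/St) * Real.exp (-(Ek - Et) * (1 / xbar i - 1 / T0)) - u i = -(v i) := by
      intro i
      rw [hv]
      simp only [Pi.sub_apply, hf xbar i]
      ring
    simp only [ContinuousLinearMap.sum_apply, ContinuousLinearMap.smul_apply,
      ContinuousLinearMap.proj_apply, smul_eq_mul]
    rw [Finset.sum_eq_single j]
    · rw [hfm j]; simp [Pi.single_apply]; ring
    · intro i _ hij
      simp [Pi.single_apply, hij.symm]
    · simp
  have : ∑ j : Fin M, (∑ i : Fin M,
      ((1/2 : ℝ) * (2 * ((Sk/St) * Real.exp (-(Ek - Et) * (1 / xbar i - 1 / T0)) - u i) * c i)) •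
        (ContinuousLinearMap.proj i : (Fin M → ℝ) →L[ℝ] ℝ)) (Pi.single j 1) * v j
      = -∑ j : Fin M, c j * (v j)^2 := by
    rw [← Finset.sum_neg_distrib]
    exact Finset.sum_congr rfl fun j _ => by rw [heval j]; ring
  rw [this, neg_lt_zero]
  obtain ⟨j0, hj0⟩ : ∃ j, v j ≠ 0 := Function.ne_iff.mp hvne
  exact Finset.sum_pos' (fun j _ => mul_nonneg (hcpos j).le (sq_nonneg _))
    ⟨j0, Finset.mem_univ j0, mul_pos (hcpos j0) (by positivity)⟩
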